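/- arXiv:1109.4973 — 5 statements merged into one kernel-verified Lean document; each statement's English description precedes it below -/
import Mathlib

section
/- Let μ be a Borel probability measure on ℝ and r ∈ ℝ. Then the limit of (iy)·G_μ(r + iy) as y → 0⁺ equals μ({r}), i.e. lim_{y→0⁺} iy · ∫ dμ(t)/((r + iy) - t) = μ({r}). -/
open MeasureTheory Filter

theorem cauchy_transform_atom
    (μ : Measure ℝ) [IsProbabilityMeasure μ] (r : ℝ) :
    Tendsto (fun y : ℝ =>
        (Complex.I * y) * ∫ t : ℝ, (((r : ℂ) + Complex.I * y) - (t : ℂ))⁻¹ ∂μ)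
      (nhdsWithin 0 (Set.Ioi 0)) (nhds ((μ {r}).toReal : ℂ)) := by
  set F : ℝ → ℝ → ℂ := fun y t =>
    (Complex.I * y) * (((r : ℂ) + Complex.I * y) - (t : ℂ))⁻¹ with hF
  have hden : ∀ y : ℝ, 0 < y → ∀ t : ℝ,
      (((r : ℂ) + Complex.I * y) - (t : ℂ)) ≠ 0 := by
    intro y hy t h
    have : (((r : ℂ) + Complex.I * y) - (t : ℂ)).im = y := by simp
    rw [h] at this
    simp at this
    exact hy.ne' this.symm
  have key : Tendsto (fun y => ∫ t, F y t ∂μ) (nhdsWithin 0 (Set.Ioi 0))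
      (nhds (∫ t, Set.indicator {r} (fun _ => (1:ℂ)) t ∂μ)) := by
    apply tendsto_integral_filter_of_dominated_convergence (fun _ => (1:ℝ))
    · filter_upwards [self_mem_nhdsWithin] with y hy
      apply Continuous.aestronglyMeasurable
      exact continuous_const.mul ((Continuous.sub (by continuity) Complex.continuous_ofReal).inv₀
        (hden y hy))
    · filter_upwards [self_mem_nhdsWithin] with y hy
      filter_upwards with t
      have h1 : ‖F y t‖ = |y| / ‖(((r : ℂ) + Complex.I * y) - (t : ℂ))‖ := by
        simp [hF, norm_mul, norm_inv, div_eq_mul_inv]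
      rw [h1]
      apply div_le_one_of_le₀
      · calc |y| = |(((r : ℂ) + Complex.I * y) - (t : ℂ)).im| := by simp
        _ ≤ ‖_‖ := Complex.abs_im_le_norm _
      · exact norm_nonneg _
    · exact integrable_const 1
    · filter_upwards with t
      by_cases ht : t = r
      · subst ht
        have : Set.indicator {t} (fun _ => (1:ℂ)) t = 1 := by simp
        rw [this]
        apply Tendsto.congr' (f₁ := fun _ => (1:ℂ))
        · filter_upwards [self_mem_nhdsWithin] with y hy
          have hne : Complex.I * (y:ℂ) ≠ 0 := by
            simp [Complex.I_ne_zero, Complex.ofReal_ne_zero, (Set.mem_Ioi.mp hy).ne']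
          have h2 : (((t : ℂ) + Complex.I * y) - (t : ℂ)) = Complex.I * y := by ring
          show (1:ℂ) = F y t
          simp only [hF]
          rw [h2, mul_inv_cancel₀ hne]
        · exact tendsto_const_nhds
      · have : Set.indicator {r} (fun _ => (1:ℂ)) t = 0 := by simp [ht]
        rw [this]
        have hrt : ((r : ℂ) - (t : ℂ)) ≠ 0 := by
          simp only [sub_ne_zero]
          exact_mod_cast (fun h => ht (by exact_mod_cast h.symm))
        have hc : ContinuousAt (fun y : ℝ => F y t) 0 := by
          apply ContinuousAt.mul
          · exact (continuous_const.mul (Complex.continuous_ofReal)).continuousAt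
          · apply ContinuousAt.inv₀
            · exact ((continuous_const.add (continuous_const.mul
                Complex.continuous_ofReal)).sub continuous_const).continuousAt
            · simpa using hrt
        have := hc.tendsto.mono_left (nhdsWithin_le_nhds (s := Set.Ioi (0:ℝ)))
        simpa [hF] using this
  have hint : ∫ t, Set.indicator {r} (fun _ => (1:ℂ)) t ∂μ = ((μ {r}).toReal : ℂ) := by
    rw [integral_indicator_const _ (measurableSet_singleton r)]
    simp
    rfl
  rw [hint] at key
  refine key.congr fun y => ?_
  exact integral_const_mul _ _
end

section
/- Let η : M_n(ℂ) → M_n(ℂ) be given by η(a) = Σ_{j=1}^{N} a_j a a_j^* for fixed matrices a_1, …, a_N ∈ M_n(ℂ). If η^m = 0 for some m ≥ 1 (η is a nilpotent linear map), then every product a_{j_1} a_{j_2} ⋯ a_{j_m} of length m of the coefficient matrices vanishes; in particular each a_j is nilpotent with a_j^m = 0. -/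
open Matrix

theorem nilpotent_cp_map_coefficients_nilpotent
    (n N : ℕ) (A : Fin N → Matrix (Fin n) (Fin n) ℂ)
    (η : Matrix (Fin n) (Fin n) ℂ → Matrix (Fin n) (Fin n) ℂ)
    (hη : ∀ a, η a = ∑ j : Fin N, A j * a * (A j)ᴴ)
    (m : ℕ) (hm : 1 ≤ m) (hnil : ∀ a, η^[m] a = 0) :
    (∀ j : Fin m → Fin N, (List.ofFn fun i : Fin m => A (j i)).prod = 0) ∧
    (∀ j : Fin N, A j ^ m = 0) := by
  have key : ∀ (k : ℕ) (a : Matrix (Fin n) (Fin n) ℂ),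
      η^[k] a = ∑ j : Fin k → Fin N,
        (List.ofFn fun i : Fin k => A (j i)).prod * a *
          ((List.ofFn fun i : Fin k => A (j i)).prod)ᴴ := by
    intro k
    induction k with
    | zero =>
        intro a
        simp [Finset.sum_const]
    | succ k ih =>
        intro a
        rw [Function.iterate_succ_apply', ih, hη]
        rw [← (Fin.consEquiv (fun _ : Fin (k+1) => Fin N)).sum_comp]
        rw [Fintype.sum_prod_type]
        refine Finset.sum_congr rfl fun x _ => ?_
        rw [Finset.mul_sum, Finset.sum_mul]
        refine Finset.sum_congr rfl fun y _ => ?_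
        simp only [Fin.consEquiv_apply, List.ofFn_succ, Fin.cons_succ, Fin.cons_zero,
          List.prod_cons, conjTranspose_mul]
        simp only [mul_assoc]
  have hzero : ∀ j : Fin m → Fin N, (List.ofFn fun i : Fin m => A (j i)).prod = 0 := by
    intro j0
    set P : (Fin m → Fin N) → Matrix (Fin n) (Fin n) ℂ :=
      fun j => (List.ofFn fun i : Fin m => A (j i)).prod with hP
    have hsum : ∑ j : Fin m → Fin N, P j * (P j)ᴴ = 0 := by
      have := key m 1
      rw [hnil 1] at this
      simpa using this.symm
    -- take diagonal entries
    have hentry : ∀ i : Fin n, (∑ j : Fin m → Fin N, ∑ l : Fin n,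
        Complex.normSq (P j i l) : ℝ) = 0 := by
      intro i
      have h1 : (∑ j : Fin m → Fin N, P j * (P j)ᴴ) i i = 0 := by rw [hsum]; rfl
      have h2 : (∑ j : Fin m → Fin N, P j * (P j)ᴴ) i i
          = ((∑ j : Fin m → Fin N, ∑ l : Fin n, Complex.normSq (P j i l) : ℝ) : ℂ) := by
        rw [Matrix.sum_apply]
        push_cast
        refine Finset.sum_congr rfl fun j _ => ?_
        rw [Matrix.mul_apply]
        refine Finset.sum_congr rfl fun l _ => ?_
        rw [Matrix.conjTranspose_apply, Complex.star_def, Complex.mul_conj]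
      exact_mod_cast h2.symm.trans h1
    ext i l
    have h3 := hentry i
    have hnn : ∀ j ∈ (Finset.univ : Finset (Fin m → Fin N)),
        (0:ℝ) ≤ ∑ l : Fin n, Complex.normSq (P j i l) :=
      fun j _ => Finset.sum_nonneg fun l _ => Complex.normSq_nonneg _
    have h4 := (Finset.sum_eq_zero_iff_of_nonneg hnn).mp h3 j0 (Finset.mem_univ _)
    have h5 := (Finset.sum_eq_zero_iff_of_nonneg
      (fun l _ => Complex.normSq_nonneg (P j0 i l))).mp h4 l (Finset.mem_univ _)
    simpa [hP] using Complex.normSq_eq_zero.mp h5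
  refine ⟨hzero, fun j => ?_⟩
  have := hzero (fun _ => j)
  simpa [List.ofFn_const, List.prod_replicate] using this
end

section
/- Let φ : M_n(ℂ) → M_n(ℂ) be a positive linear map (mapping positive semidefinite matrices to positive semidefinite matrices) that is 2-positive (e.g., completely positive). Then for every a ∈ M_n(ℂ), φ(a)^* φ(a) ≤ ‖φ(1)‖ · φ(a^* a) in the Loewner order. -/
open Matrix
open scoped Matrix.Norms.L2Operator ComplexOrder

/-- The amplification of a map on `n × n` matrices to `(k*n) × (k*n)` matrices,
viewed as `k × k` block matrices with `n × n` blocks. -/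
def amplify (n k : ℕ) (φ : Matrix (Fin n) (Fin n) ℂ → Matrix (Fin n) (Fin n) ℂ)
    (M : Matrix (Fin k × Fin n) (Fin k × Fin n) ℂ) :
    Matrix (Fin k × Fin n) (Fin k × Fin n) ℂ :=
  fun p q => φ (fun r s => M (p.1, r) (q.1, s)) p.2 q.2

private lemma ks_norm_bound {n : ℕ} (C : Matrix (Fin n) (Fin n) ℂ) (y : Fin n → ℂ) :
    (star y ⬝ᵥ C *ᵥ y).re ≤ ‖C‖ * (star y ⬝ᵥ y).re := by
  set y' : EuclideanSpace ℂ (Fin n) := (WithLp.equiv 2 _).symm y with hy'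
  set w : EuclideanSpace ℂ (Fin n) := (WithLp.equiv 2 _).symm (C *ᵥ y) with hw
  have h1 : star y ⬝ᵥ (C *ᵥ y) = @inner ℂ _ _ y' w :=
    by rw [dotProduct_comm]; rfl
  have h2 : star y ⬝ᵥ y = @inner ℂ _ _ y' y' := by rw [dotProduct_comm]; rfl
  have h3 : (star y ⬝ᵥ y).re = ‖y'‖ ^ 2 := by
    rw [h2, ← inner_self_eq_norm_sq (𝕜 := ℂ) y']; rfl
  have h4 : ‖w‖ ≤ ‖C‖ * ‖y'‖ := by have := C.l2_opNorm_mulVec y'; exact this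
  have h5 : (star y ⬝ᵥ (C *ᵥ y)).re ≤ ‖y'‖ * ‖w‖ := by
    rw [h1]
    have := norm_inner_le_norm (𝕜 := ℂ) y' w
    exact (Complex.re_le_norm _).trans this
  have h6 : 0 ≤ ‖y'‖ := norm_nonneg _
  calc (star y ⬝ᵥ C *ᵥ y).re ≤ ‖y'‖ * ‖w‖ := h5
    _ ≤ ‖y'‖ * (‖C‖ * ‖y'‖) := by nlinarith [norm_nonneg w]
    _ = ‖C‖ * (star y ⬝ᵥ y).re := by rw [h3]; ring

private lemma ks_block_quad {n : ℕ} (H : Matrix (Fin 2 × Fin n) (Fin 2 × Fin n) ℂ)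
    (x y : Fin n → ℂ) :
    star (fun p : Fin 2 × Fin n => if p.1 = 0 then x p.2 else y p.2) ⬝ᵥ
      H *ᵥ (fun p : Fin 2 × Fin n => if p.1 = 0 then x p.2 else y p.2) =
    star x ⬝ᵥ (fun r s => H (0,r) (0,s)) *ᵥ x + star x ⬝ᵥ (fun r s => H (0,r) (1,s)) *ᵥ y
    + star y ⬝ᵥ (fun r s => H (1,r) (0,s)) *ᵥ x + star y ⬝ᵥ (fun r s => H (1,r) (1,s)) *ᵥ y := by
  simp only [dotProduct, mulVec, Fintype.sum_prod_type, Fin.sum_univ_two, Pi.star_apply]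
  simp only [show ((1:Fin 2) = 0) = False from by decide, if_false, if_true,
    mul_ite, mul_add, Finset.sum_add_distrib]
  ring

private lemma ks_real {α s γ c : ℝ} (hα : 0 ≤ α) (hs : 0 ≤ s) (hγ : 0 ≤ γ) (hc : 0 ≤ c)
    (hγc : γ ≤ c * s) (h : ∀ t : ℝ, 0 ≤ α - 2*t*s + t^2*γ) : s ≤ c * α := by
  rcases eq_or_lt_of_le hc with h0 | h0
  · have hγ0 : γ = 0 := le_antisymm (by nlinarith) hγ
    rcases eq_or_lt_of_le hs with hs0 | hs0
    · nlinarith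
    · exfalso
      have ht := h ((α+1)/(2*s))
      rw [hγ0] at ht
      have : (α+1)/(2*s) * s = (α+1)/2 := by field_simp
      nlinarith
  · have ht := h (1/c)
    have hc2 : (0:ℝ) < c^2 := by positivity
    have ht2 : 0 ≤ c^2 * (α - 2*(1/c)*s + (1/c)^2*γ) := mul_nonneg hc2.le ht
    have h3 : c^2 * (2*(1/c)*s) = 2*c*s := by field_simp
    have h4 : c^2 * ((1/c)^2*γ) = γ := by field_simp
    nlinarith

theorem kadison_schwarz_two_positive
    (n : ℕ) (φ : Matrix (Fin n) (Fin n) ℂ →ₗ[ℂ] Matrix (Fin n) (Fin n) ℂ)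
    (hpos : ∀ a : Matrix (Fin n) (Fin n) ℂ, a.PosSemidef → (φ a).PosSemidef)
    (h2pos : ∀ M : Matrix (Fin 2 × Fin n) (Fin 2 × Fin n) ℂ,
      M.PosSemidef → (amplify n 2 (fun a => φ a) M).PosSemidef)
    (a : Matrix (Fin n) (Fin n) ℂ) :
    ((‖φ 1‖ : ℂ) • φ (aᴴ * a) - (φ a)ᴴ * (φ a)).PosSemidef := by
  classical
  set f : Fin 2 → Fin 2 → Matrix (Fin n) (Fin n) ℂ := ![![aᴴ * a, aᴴ], ![a, 1]] with hf
  set g : Fin 2 → Fin 2 → Matrix (Fin n) (Fin n) ℂ := ![![a, 1], ![0, 0]] with hg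
  set M : Matrix (Fin 2 × Fin n) (Fin 2 × Fin n) ℂ := fun p q => f p.1 q.1 p.2 q.2 with hMdef
  set Bb : Matrix (Fin 2 × Fin n) (Fin 2 × Fin n) ℂ := fun p q => g p.1 q.1 p.2 q.2 with hBbdef
  have hM : M = Bbᴴ * Bb := by
    ext ⟨j, r⟩ ⟨k, s⟩
    simp only [Matrix.mul_apply, Matrix.conjTranspose_apply]
    fin_cases j <;> fin_cases k <;>
      simp [hMdef, hBbdef, hf, hg, Matrix.mul_apply, Matrix.conjTranspose_apply,
        Fintype.sum_prod_type, Fin.sum_univ_two, Matrix.one_apply, eq_comm]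
  have hMpsd : M.PosSemidef := hM ▸ posSemidef_conjTranspose_mul_self Bb
  set H := amplify n 2 (fun b => φ b) M with hHdef
  have hH : H.PosSemidef := h2pos M hMpsd
  have hHblk : ∀ j k : Fin 2, (fun r s => H (j, r) (k, s)) = φ (f j k) := by
    intro j k; rfl
  -- φ(aᴴ) = (φ a)ᴴ
  have hadj : φ aᴴ = (φ a)ᴴ := by
    ext r s
    have h := congr_fun (congr_fun hH.1 (0, r)) (1, s)
    have h01 : H (0, r) (1, s) = φ aᴴ r s := by
      rw [show H (0, r) (1, s) = (fun r s => H (0, r) (1, s)) r s from rfl, hHblk]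
      simp [hf]
    have h10 : H (1, s) (0, r) = φ a s r := by
      rw [show H (1, s) (0, r) = (fun r' s' => H (1, r') (0, s')) s r from rfl, hHblk]
      simp [hf]
    rw [Matrix.conjTranspose_apply, h10, h01] at h
    rw [Matrix.conjTranspose_apply, ← h]
  have hApsd : (φ (aᴴ * a)).PosSemidef := hpos _ (posSemidef_conjTranspose_mul_self a)
  have hCpsd : (φ 1).PosSemidef := hpos 1 Matrix.PosSemidef.one
  refine Matrix.PosSemidef.of_dotProduct_mulVec_nonneg ?_ ?_
  · -- Hermitian
    unfold Matrix.IsHermitian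
    rw [Matrix.conjTranspose_sub, Matrix.conjTranspose_smul, Matrix.conjTranspose_mul,
      Matrix.conjTranspose_conjTranspose, hApsd.1.eq]
    congr 1
    simp [Complex.star_def, Complex.conj_ofReal]
  · intro x
    set y : Fin n → ℂ := (φ a) *ᵥ x with hy
    set qA : ℂ := star x ⬝ᵥ (φ (aᴴ * a)) *ᵥ x with hqA
    set S : ℂ := star y ⬝ᵥ y with hS
    set Γ : ℂ := star y ⬝ᵥ (φ 1) *ᵥ y with hΓ
    have hxB : star x ⬝ᵥ (φ a)ᴴ *ᵥ y = S := by
      rw [dotProduct_mulVec, ← star_mulVec, hS, ← hy]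
    have hBB : star x ⬝ᵥ ((φ a)ᴴ * (φ a)) *ᵥ x = S := by
      rw [← Matrix.mulVec_mulVec, ← hy, hxB]
    -- nonnegativity facts
    have hqA0 : 0 ≤ qA := hApsd.dotProduct_mulVec_nonneg x
    have hS0 : 0 ≤ S := dotProduct_star_self_nonneg y
    have hΓ0 : 0 ≤ Γ := hCpsd.dotProduct_mulVec_nonneg y
    have hqA0' := Complex.le_def.mp hqA0
    have hS0' := Complex.le_def.mp hS0
    have hΓ0' := Complex.le_def.mp hΓ0
    simp only [Complex.zero_re, Complex.zero_im] at hqA0' hS0' hΓ0'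
    -- quadratic in t
    have hqt : ∀ t : ℝ, 0 ≤ qA.re - 2 * t * S.re + t ^ 2 * Γ.re := by
      intro t
      set c : ℂ := -(t : ℂ) with hc
      have hv := hH.dotProduct_mulVec_nonneg (fun p : Fin 2 × Fin n => if p.1 = 0 then x p.2 else (c * y p.2))
      rw [ks_block_quad H x (fun r => c * y r)] at hv
      have e1 : (fun r s => H (0, r) (0, s)) = φ (aᴴ * a) := by rw [hHblk]; simp [hf]; rfl
      have e2 : (fun r s => H (0, r) (1, s)) = (φ a)ᴴ := by rw [hHblk]; simp [hf, hadj]; rfl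
      have e3 : (fun r s => H (1, r) (0, s)) = φ a := by rw [hHblk]; simp [hf]; rfl
      have e4 : (fun r s => H (1, r) (1, s)) = φ 1 := by rw [hHblk]; simp [hf]; rfl
      rw [e1, e2, e3, e4] at hv
      have hcy : (fun r => c * y r) = c • y := rfl
      rw [hcy] at hv
      have hcross1 : star x ⬝ᵥ (φ a)ᴴ *ᵥ (c • y) = c * S := by
        rw [Matrix.mulVec_smul, dotProduct_smul, hxB]; rfl
      have hcross2 : star (c • y) ⬝ᵥ (φ a) *ᵥ x = star c * S := by
        rw [star_smul, smul_dotProduct, ← hy, ← hS]; rfl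
      have hlast : star (c • y) ⬝ᵥ (φ 1) *ᵥ (c • y) = star c * c * Γ := by
        rw [star_smul, smul_dotProduct, Matrix.mulVec_smul, dotProduct_smul, hΓ]
        simp [smul_smul, mul_assoc]
      rw [hcross1, hcross2, hlast, ← hqA] at hv
      have hstar : star c * c = ((t ^ 2 : ℝ) : ℂ) := by
        simp [hc, Complex.star_def]
        ring
      have hcr : c = ((-t : ℝ) : ℂ) := by rw [hc, Complex.ofReal_neg]
      have hstar2 : star ((-t : ℝ) : ℂ) = ((-t : ℝ) : ℂ) := by
        simp [Complex.star_def]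
      rw [hstar, hcr, hstar2] at hv
      have hre := (Complex.le_def.mp hv).1
      have hSim : S.im = 0 := hS0'.2.symm
      have hΓim : Γ.im = 0 := hΓ0'.2.symm
      simp only [Complex.zero_re, Complex.add_re, Complex.mul_re, Complex.ofReal_re,
        Complex.ofReal_im, hSim, hΓim, zero_mul, mul_zero, sub_zero] at hre
      nlinarith [hre]
    have hnorm : Γ.re ≤ ‖φ 1‖ * S.re := by
      have := ks_norm_bound (φ 1) y
      rw [← hΓ, ← hS] at this
      exact this
    have hkey : S.re ≤ ‖φ 1‖ * qA.re :=
      ks_real hqA0'.1 hS0'.1 hΓ0'.1 (norm_nonneg _) hnorm hqt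
    -- final assembly
    rw [Matrix.sub_mulVec, dotProduct_sub, Matrix.smul_mulVec,
      dotProduct_smul, hBB, ← hqA]
    rw [smul_eq_mul, Complex.le_def]
    have hSim : S.im = 0 := hS0'.2.symm
    have hqAim : qA.im = 0 := hqA0'.2.symm
    constructor
    · simp only [Complex.zero_re, Complex.sub_re, Complex.mul_re, Complex.ofReal_re,
        Complex.ofReal_im, hqAim, mul_zero, zero_mul, sub_zero]
      linarith [hkey]
    · simp [Complex.sub_im, Complex.mul_im, hqAim, hSim]
end

section
/- Let φ : M_n(ℂ) → M_n(ℂ) be a nonzero completely positive map. Then there exists a unique maximal projection q ≠ 1 in M_n(ℂ) with φ(q) = 0 such that every projection p with φ(p) = 0 satisfies p ≤ q; moreover, for every positive semidefinite c with φ(c) = 0 one has c·q = q·c = c. -/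
open Matrix
open scoped ComplexOrder

/-- Complete positivity of a linear map on matrices. -/
def IsCompletelyPositive (n : ℕ)
    (φ : Matrix (Fin n) (Fin n) ℂ →ₗ[ℂ] Matrix (Fin n) (Fin n) ℂ) : Prop :=
  ∀ k : ℕ, ∀ M : Matrix (Fin k × Fin n) (Fin k × Fin n) ℂ,
    M.PosSemidef → (amplify n k (fun a => φ a) M).PosSemidef

section Auxiliary

variable {n : ℕ}

/-- A PSD matrix whose negative is also PSD is zero. -/
lemma CP_psd_eq_zero_of_neg {A : Matrix (Fin n) (Fin n) ℂ} (h1 : A.PosSemidef)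
    (h2 : (-A).PosSemidef) : A = 0 := by
  have hv : ∀ x, A *ᵥ x = 0 := by
    intro x
    rw [← h1.dotProduct_mulVec_zero_iff]
    have a := h1.dotProduct_mulVec_nonneg x
    have b := h2.dotProduct_mulVec_nonneg x
    rw [neg_mulVec, dotProduct_neg] at b
    exact le_antisymm (neg_nonneg.mp b) a
  ext i j
  have h := congrFun (hv (Pi.single j 1)) i
  simpa using h

lemma CP_psd_conj_diag (U : Matrix.unitaryGroup (Fin n) ℂ) (v : Fin n → ℂ)
    (hv : ∀ i, 0 ≤ v i) :
    ((U : Matrix (Fin n) (Fin n) ℂ) * diagonal v *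
      star (U : Matrix (Fin n) (Fin n) ℂ)).PosSemidef := by
  rw [star_eq_conjTranspose]
  exact (posSemidef_diagonal_iff.mpr hv).mul_mul_conjTranspose_same _

lemma CP_conj_sub {R : Type*} [Ring R] (u x y v : R) :
    u * x * v - u * y * v = u * (x - y) * v := by
  rw [mul_sub, sub_mul]

lemma CP_conj_add {R : Type*} [Ring R] (u x y v : R) :
    u * x * v + u * y * v = u * (x + y) * v := by
  rw [mul_add, add_mul]

lemma CP_smul_diag_sub (t : ℂ) (v w : Fin n → ℂ) :
    t • diagonal v - diagonal w = diagonal (fun i => t * v i - w i) := by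
  ext i j
  by_cases h : i = j <;> simp [diagonal_apply, h]

lemma CP_smul_one_sub_diag (t : ℂ) (w : Fin n → ℂ) :
    t • (1 : Matrix (Fin n) (Fin n) ℂ) - diagonal w = diagonal (fun i => t - w i) := by
  ext i j
  by_cases h : i = j <;> simp [diagonal_apply, Matrix.one_apply, h]

lemma CP_smul_one_add_diag (t : ℂ) (w : Fin n → ℂ) :
    t • (1 : Matrix (Fin n) (Fin n) ℂ) + diagonal w = diagonal (fun i => t + w i) := by
  ext i j
  by_cases h : i = j <;> simp [diagonal_apply, Matrix.one_apply, h]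

lemma CP_smul_one_conj (U : Matrix.unitaryGroup (Fin n) ℂ) (t : ℂ) :
    t • (1 : Matrix (Fin n) (Fin n) ℂ)
      = (U : Matrix (Fin n) (Fin n) ℂ) * (t • 1) * star (U : Matrix (Fin n) (Fin n) ℂ) := by
  have hU : (U : Matrix (Fin n) (Fin n) ℂ) * star (U : Matrix (Fin n) (Fin n) ℂ) = 1 :=
    mem_unitaryGroup_iff.mp U.2
  rw [mul_smul_comm, smul_mul_assoc, mul_one, hU]

lemma CP_smul_one_sub_psd {a : Matrix (Fin n) (Fin n) ℂ} (ha : a.IsHermitian) {t : ℝ}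
    (h : ∀ i, ha.eigenvalues i ≤ t) :
    ((t : ℂ) • 1 - a).PosSemidef := by
  have key : (t : ℂ) • (1 : Matrix (Fin n) (Fin n) ℂ) - a
      = (ha.eigenvectorUnitary : Matrix (Fin n) (Fin n) ℂ) *
          diagonal (fun i => (t : ℂ) - (RCLike.ofReal ∘ ha.eigenvalues) i) *
          star (ha.eigenvectorUnitary : Matrix (Fin n) (Fin n) ℂ) := by
    conv_lhs => rw [ha.spectral_theorem, CP_smul_one_conj ha.eigenvectorUnitary t]
    rw [Unitary.conjStarAlgAut_apply, CP_conj_sub, CP_smul_one_sub_diag]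
  rw [key]
  apply CP_psd_conj_diag
  intro i
  have : ((t - ha.eigenvalues i : ℝ) : ℂ) = (t : ℂ) - (RCLike.ofReal ∘ ha.eigenvalues) i := by
    push_cast; rfl
  rw [← this]
  exact_mod_cast sub_nonneg.mpr (h i)

lemma CP_smul_one_add_psd {a : Matrix (Fin n) (Fin n) ℂ} (ha : a.IsHermitian) {t : ℝ}
    (h : ∀ i, -t ≤ ha.eigenvalues i) :
    ((t : ℂ) • 1 + a).PosSemidef := by
  have key : (t : ℂ) • (1 : Matrix (Fin n) (Fin n) ℂ) + a
      = (ha.eigenvectorUnitary : Matrix (Fin n) (Fin n) ℂ) *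
          diagonal (fun i => (t : ℂ) + (RCLike.ofReal ∘ ha.eigenvalues) i) *
          star (ha.eigenvectorUnitary : Matrix (Fin n) (Fin n) ℂ) := by
    conv_lhs => rw [ha.spectral_theorem, CP_smul_one_conj ha.eigenvectorUnitary t]
    rw [Unitary.conjStarAlgAut_apply, CP_conj_add, CP_smul_one_add_diag]
  rw [key]
  apply CP_psd_conj_diag
  intro i
  have : ((t + ha.eigenvalues i : ℝ) : ℂ) = (t : ℂ) + (RCLike.ofReal ∘ ha.eigenvalues) i := by
    push_cast; rfl
  rw [← this]
  exact_mod_cast by linarith [h i]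

/-- Kernel comparison from rank comparison, for PSD matrices. -/
lemma CP_ker_subset {a b : Matrix (Fin n) (Fin n) ℂ} (ha : a.PosSemidef) (hb : b.PosSemidef)
    (hr : (a + b).rank ≤ a.rank) : ∀ x, a *ᵥ x = 0 → b *ᵥ x = 0 := by
  have hker : ∀ x, (a + b) *ᵥ x = 0 → a *ᵥ x = 0 ∧ b *ᵥ x = 0 := by
    intro x hx
    have h0 : star x ⬝ᵥ (a + b) *ᵥ x = 0 := by rw [hx, dotProduct_zero]
    rw [add_mulVec, dotProduct_add] at h0
    have h1 := ha.dotProduct_mulVec_nonneg x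
    have h2 := hb.dotProduct_mulVec_nonneg x
    have e1 : star x ⬝ᵥ a *ᵥ x = 0 := by
      have : star x ⬝ᵥ a *ᵥ x ≤ 0 := by
        calc star x ⬝ᵥ a *ᵥ x ≤ star x ⬝ᵥ a *ᵥ x + star x ⬝ᵥ b *ᵥ x :=
          le_add_of_nonneg_right h2
        _ = 0 := h0
      exact le_antisymm this h1
    have e2 : star x ⬝ᵥ b *ᵥ x = 0 := by
      rw [e1, zero_add] at h0; exact h0
    exact ⟨(ha.dotProduct_mulVec_zero_iff x).mp e1, (hb.dotProduct_mulVec_zero_iff x).mp e2⟩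
  have hle : LinearMap.ker (a + b).mulVecLin ≤ LinearMap.ker a.mulVecLin := by
    intro x hx
    rw [LinearMap.mem_ker, mulVecLin_apply] at hx ⊢
    exact (hker x hx).1
  have heq : LinearMap.ker (a + b).mulVecLin = LinearMap.ker a.mulVecLin := by
    apply Submodule.eq_of_le_of_finrank_le hle
    have e1 := LinearMap.finrank_range_add_finrank_ker (a + b).mulVecLin
    have e2 := LinearMap.finrank_range_add_finrank_ker a.mulVecLin
    have hr' : Module.finrank ℂ (LinearMap.range (a + b).mulVecLin)
        ≤ Module.finrank ℂ (LinearMap.range a.mulVecLin) := hr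
    omega
  intro x hx
  have hx' : x ∈ LinearMap.ker (a + b).mulVecLin := by
    rw [heq, LinearMap.mem_ker, mulVecLin_apply]; exact hx
  rw [LinearMap.mem_ker, mulVecLin_apply] at hx'
  exact (hker x hx').2

/-- Positivity from complete positivity. -/
lemma CP_pos {φ : Matrix (Fin n) (Fin n) ℂ →ₗ[ℂ] Matrix (Fin n) (Fin n) ℂ}
    (hcp : IsCompletelyPositive n φ) {a : Matrix (Fin n) (Fin n) ℂ}
    (ha : a.PosSemidef) : (φ a).PosSemidef := by
  have hM : (a.submatrix (Prod.snd : Fin 1 × Fin n → Fin n) Prod.snd).PosSemidef :=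
    ha.submatrix _
  have h2 := hcp 1 _ hM
  have key : φ a = (amplify n 1 (fun x => φ x) (a.submatrix Prod.snd Prod.snd)).submatrix
      (fun i => ((0 : Fin 1), i)) (fun i => ((0 : Fin 1), i)) := rfl
  rw [key]
  exact h2.submatrix _

/-- If `φ 1 = 0` for a completely positive `φ`, then `φ = 0`. -/
lemma CP_phi_zero_of_one {φ : Matrix (Fin n) (Fin n) ℂ →ₗ[ℂ] Matrix (Fin n) (Fin n) ℂ}
    (hcp : IsCompletelyPositive n φ) (h1 : φ 1 = 0) : φ = 0 := by
  have hpsd : ∀ c : Matrix (Fin n) (Fin n) ℂ, c.PosSemidef → φ c = 0 := by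
    intro c hc
    set t : ℝ := ∑ i, hc.1.eigenvalues i with ht_def
    have ht : ∀ i, hc.1.eigenvalues i ≤ t := fun i =>
      Finset.single_le_sum (fun j _ => hc.eigenvalues_nonneg j) (Finset.mem_univ i)
    have hb : ((t : ℂ) • 1 - c).PosSemidef := CP_smul_one_sub_psd hc.1 ht
    have h2 := CP_pos hcp hb
    rw [map_sub, LinearMap.map_smul, h1, smul_zero, zero_sub] at h2
    exact CP_psd_eq_zero_of_neg (CP_pos hcp hc) h2
  have hherm : ∀ c : Matrix (Fin n) (Fin n) ℂ, c.IsHermitian → φ c = 0 := by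
    intro c hc
    set t : ℝ := ∑ i, |hc.eigenvalues i| with ht_def
    have hsum : ∀ i, |hc.eigenvalues i| ≤ t := fun i =>
      Finset.single_le_sum (f := fun j => |hc.eigenvalues j|)
        (fun j _ => abs_nonneg _) (Finset.mem_univ i)
    have ht2 : ∀ i, -t ≤ hc.eigenvalues i := fun i =>
      le_trans (neg_le_neg (hsum i)) (neg_abs_le _)
    have hplus := hpsd _ (CP_smul_one_add_psd hc ht2)
    rw [map_add, LinearMap.map_smul, h1, smul_zero, zero_add] at hplus
    exact hplus
  apply LinearMap.ext
  intro a
  have hherm1 : ((2⁻¹ : ℂ) • (a + aᴴ)).IsHermitian := by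
    rw [Matrix.IsHermitian, conjTranspose_smul, conjTranspose_add, conjTranspose_conjTranspose]
    rw [show star (2⁻¹ : ℂ) = 2⁻¹ by norm_num]
    rw [add_comm]
  have hherm2 : ((-Complex.I * 2⁻¹) • (a - aᴴ)).IsHermitian := by
    rw [Matrix.IsHermitian, conjTranspose_smul, conjTranspose_sub, conjTranspose_conjTranspose]
    rw [show star (-Complex.I * 2⁻¹) = Complex.I * 2⁻¹ by
      simp [Complex.ext_iff]]
    rw [show (aᴴ - a) = (-1 : ℂ) • (a - aᴴ) by simp]
    rw [smul_smul]
    congr 1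
    ring
  have hdecomp : a = (2⁻¹ : ℂ) • (a + aᴴ) + Complex.I • ((-Complex.I * 2⁻¹) • (a - aᴴ)) := by
    rw [smul_smul, show Complex.I * (-Complex.I * 2⁻¹) = 2⁻¹ by
      rw [← mul_assoc, mul_neg, Complex.I_mul_I, neg_neg, one_mul]]
    rw [smul_add, smul_sub]
    module
  rw [LinearMap.zero_apply]
  conv_lhs => rw [hdecomp]
  rw [map_add, hherm _ hherm1, LinearMap.map_smul, hherm _ hherm2, smul_zero, add_zero]

end Auxiliary

theorem cp_maximal_kernel_projection
    (n : ℕ) (φ : Matrix (Fin n) (Fin n) ℂ →ₗ[ℂ] Matrix (Fin n) (Fin n) ℂ)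
    (hcp : IsCompletelyPositive n φ) (hφ : φ ≠ 0) :
    ∃! q : Matrix (Fin n) (Fin n) ℂ,
      q.IsHermitian ∧ q * q = q ∧ q ≠ 1 ∧ φ q = 0 ∧
      (∀ p : Matrix (Fin n) (Fin n) ℂ, p.IsHermitian → p * p = p → φ p = 0 →
        (q - p).PosSemidef) ∧
      (∀ c : Matrix (Fin n) (Fin n) ℂ, c.PosSemidef → φ c = 0 →
        c * q = c ∧ q * c = c) := by
  classical
  -- the set of kernel PSD matrices
  set K : Set (Matrix (Fin n) (Fin n) ℂ) := {c | c.PosSemidef ∧ φ c = 0} with hK_def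
  have h0K : (0 : Matrix (Fin n) (Fin n) ℂ) ∈ K := ⟨Matrix.PosSemidef.zero, map_zero φ⟩
  -- choose a kernel element of maximal rank
  obtain ⟨c₀, hc₀K, hc₀max⟩ :
      ∃ c₀ ∈ K, ∀ c ∈ K, Matrix.rank c ≤ Matrix.rank c₀ := by
    have hbdd : BddAbove (Matrix.rank '' K) := by
      refine ⟨n, ?_⟩
      rintro r ⟨c, _, rfl⟩
      simpa using c.rank_le_card_width
    have hne : (Matrix.rank '' K).Nonempty := ⟨Matrix.rank 0, Set.mem_image_of_mem _ h0K⟩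
    have hmem := Nat.sSup_mem hne hbdd
    obtain ⟨c₀, hc₀K, hrank⟩ := hmem
    exact ⟨c₀, hc₀K, fun c hc => hrank ▸ le_csSup hbdd ⟨c, hc, rfl⟩⟩
  obtain ⟨hc₀psd, hc₀φ⟩ := hc₀K
  set hH : c₀.IsHermitian := hc₀psd.1 with hH_def
  set U := hH.eigenvectorUnitary with hU_def
  set ev : Fin n → ℝ := hH.eigenvalues with hev_def
  have hev_nonneg : ∀ i, 0 ≤ ev i := hc₀psd.eigenvalues_nonneg
  -- the support projection of c₀
  set d : Matrix (Fin n) (Fin n) ℂ :=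
    diagonal (fun i => if ev i = 0 then 0 else 1) with hd_def
  set q : Matrix (Fin n) (Fin n) ℂ :=
    (U : Matrix (Fin n) (Fin n) ℂ) * d * star (U : Matrix (Fin n) (Fin n) ℂ) with hq_def
  have hUU : (U : Matrix (Fin n) (Fin n) ℂ) * star (U : Matrix (Fin n) (Fin n) ℂ) = 1 :=
    mem_unitaryGroup_iff.mp U.2
  have hUU' : star (U : Matrix (Fin n) (Fin n) ℂ) * (U : Matrix (Fin n) (Fin n) ℂ) = 1 :=
    mem_unitaryGroup_iff'.mp U.2
  -- q is PSD
  have hq_psd : q.PosSemidef := by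
    apply CP_psd_conj_diag
    intro i
    by_cases h : ev i = 0 <;> simp [h]
  have hq_herm : q.IsHermitian := hq_psd.1
  -- q is idempotent
  have hq_idem : q * q = q := by
    rw [hq_def]
    have : d * d = d := by
      rw [hd_def, diagonal_mul_diagonal]
      apply congrArg diagonal
      funext i
      by_cases h : ev i = 0 <;> simp [h]
    calc (U : Matrix (Fin n) (Fin n) ℂ) * d * star (U : Matrix (Fin n) (Fin n) ℂ) *
          ((U : Matrix (Fin n) (Fin n) ℂ) * d * star (U : Matrix (Fin n) (Fin n) ℂ))
        = (U : Matrix (Fin n) (Fin n) ℂ) * d *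
          ((star (U : Matrix (Fin n) (Fin n) ℂ) * (U : Matrix (Fin n) (Fin n) ℂ)) *
            (d * star (U : Matrix (Fin n) (Fin n) ℂ))) := by
          simp only [Matrix.mul_assoc]
      _ = (U : Matrix (Fin n) (Fin n) ℂ) * (d * d) * star (U : Matrix (Fin n) (Fin n) ℂ) := by
          rw [hUU', one_mul]; simp only [Matrix.mul_assoc]
      _ = (U : Matrix (Fin n) (Fin n) ℂ) * d * star (U : Matrix (Fin n) (Fin n) ℂ) := by
          rw [this]
  -- c₀ * q = c₀
  have hc₀q : c₀ * q = c₀ := by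
    conv_lhs => rw [hH.spectral_theorem]
    conv_rhs => rw [hH.spectral_theorem]
    rw [hq_def]
    calc (U : Matrix (Fin n) (Fin n) ℂ) * diagonal (RCLike.ofReal ∘ ev) *
          star (U : Matrix (Fin n) (Fin n) ℂ) *
          ((U : Matrix (Fin n) (Fin n) ℂ) * d * star (U : Matrix (Fin n) (Fin n) ℂ))
        = (U : Matrix (Fin n) (Fin n) ℂ) * diagonal (RCLike.ofReal ∘ ev) *
          ((star (U : Matrix (Fin n) (Fin n) ℂ) * (U : Matrix (Fin n) (Fin n) ℂ)) *
            (d * star (U : Matrix (Fin n) (Fin n) ℂ))) := by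
          simp only [Matrix.mul_assoc]
      _ = (U : Matrix (Fin n) (Fin n) ℂ) * (diagonal (RCLike.ofReal ∘ ev) * d) *
            star (U : Matrix (Fin n) (Fin n) ℂ) := by
          rw [hUU', one_mul]; simp only [Matrix.mul_assoc]
      _ = (U : Matrix (Fin n) (Fin n) ℂ) * diagonal (RCLike.ofReal ∘ ev) *
            star (U : Matrix (Fin n) (Fin n) ℂ) := by
          rw [hd_def, diagonal_mul_diagonal]
          have : (fun i => (RCLike.ofReal ∘ ev) i * if ev i = 0 then (0:ℂ) else 1)
              = RCLike.ofReal ∘ ev := by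
            funext i
            by_cases h : ev i = 0 <;> simp [h, Function.comp]
          rw [this]
  -- φ q = 0 : bound q by a multiple of c₀
  have hφq : φ q = 0 := by
    set t : ℝ := ∑ i, (if ev i = 0 then 0 else (ev i)⁻¹) with ht_def
    have ht_nonneg : ∀ j, (0:ℝ) ≤ if ev j = 0 then 0 else (ev j)⁻¹ := by
      intro j
      by_cases h : ev j = 0
      · simp [h]
      · simp only [h, if_false]
        exact inv_nonneg.mpr (hev_nonneg j)
    have hbound : ((t : ℂ) • c₀ - q).PosSemidef := by
      have key : (t : ℂ) • c₀ - q
          = (U : Matrix (Fin n) (Fin n) ℂ) *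
            diagonal (fun i => (t : ℂ) * (RCLike.ofReal ∘ ev) i -
              (if ev i = 0 then 0 else 1)) *
            star (U : Matrix (Fin n) (Fin n) ℂ) := by
        have e1 : (t : ℂ) • c₀ = (U : Matrix (Fin n) (Fin n) ℂ) *
            ((t : ℂ) • diagonal (RCLike.ofReal ∘ ev)) *
            star (U : Matrix (Fin n) (Fin n) ℂ) := by
          conv_lhs => rw [hH.spectral_theorem]
          rw [Unitary.conjStarAlgAut_apply, mul_smul_comm, smul_mul_assoc]
        rw [e1, hq_def, CP_conj_sub, hd_def, CP_smul_diag_sub]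
      rw [key]
      apply CP_psd_conj_diag
      intro i
      by_cases h : ev i = 0
      · simp [h, Function.comp]
      · simp only [h, if_false, Function.comp]
        have h1 : (ev i)⁻¹ ≤ t := by
          have := Finset.single_le_sum (fun j _ => ht_nonneg j) (Finset.mem_univ i)
          simpa [h] using this
        have h2 : (1:ℝ) ≤ t * ev i := by
          have := mul_le_mul_of_nonneg_right h1 (hev_nonneg i)
          rwa [inv_mul_cancel₀ h] at this
        have : ((t * ev i - 1 : ℝ) : ℂ)
            = (t : ℂ) * (RCLike.ofReal (ev i)) - 1 := by push_cast; rfl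
        rw [← this]
        exact_mod_cast sub_nonneg.mpr h2
    have hφbound := CP_pos hcp hbound
    rw [map_sub, LinearMap.map_smul, hc₀φ, smul_zero, zero_sub] at hφbound
    exact CP_psd_eq_zero_of_neg (CP_pos hcp hq_psd) hφbound
  -- key absorption property
  have habs : ∀ c : Matrix (Fin n) (Fin n) ℂ, c.PosSemidef → φ c = 0 →
      c * q = c ∧ q * c = c := by
    intro c hc hφc
    have hsum : (c₀ + c) ∈ K := ⟨hc₀psd.add hc, by rw [map_add, hc₀φ, hφc, add_zero]⟩
    have hrank : (c₀ + c).rank ≤ c₀.rank := hc₀max _ hsum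
    have hks := CP_ker_subset hc₀psd hc hrank
    -- c₀ * (1 - q) = 0
    have hc₀1q : c₀ * (1 - q) = 0 := by
      rw [mul_sub, mul_one, hc₀q, sub_self]
    -- c * (1 - q) = 0
    have hcq : c * (1 - q) = 0 := by
      have hv : ∀ x, (c * (1 - q)) *ᵥ x = 0 := by
        intro x
        rw [← mulVec_mulVec]
        apply hks
        rw [mulVec_mulVec, hc₀1q, zero_mulVec]
      ext i j
      have h := congrFun (hv (Pi.single j 1)) i
      simpa using h
    have h1 : c * q = c := by
      rw [mul_sub, mul_one] at hcq
      exact (sub_eq_zero.mp hcq).symm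
    have h2 : q * c = c := by
      have hcq' : (1 - q) * c = 0 := by
        have := congrArg conjTranspose hcq
        rwa [conjTranspose_mul, conjTranspose_sub, conjTranspose_one, hq_herm.eq, hc.1.eq,
          conjTranspose_zero] at this
      rw [sub_mul, one_mul] at hcq'
      exact (sub_eq_zero.mp hcq').symm
    exact ⟨h1, h2⟩
  -- maximality over kernel projections
  have hmax : ∀ p : Matrix (Fin n) (Fin n) ℂ, p.IsHermitian → p * p = p → φ p = 0 →
      (q - p).PosSemidef := by
    intro p hp hp2 hφp
    have hp_psd : p.PosSemidef := by
      have : p = pᴴ * p := by rw [hp.eq, hp2]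
      rw [this]
      exact posSemidef_conjTranspose_mul_self p
    obtain ⟨hpq, hqp⟩ := habs p hp_psd hφp
    have hherm : (q - p).IsHermitian := hq_herm.sub hp
    have : q - p = (q - p)ᴴ * (q - p) := by
      rw [hherm.eq, sub_mul, mul_sub, mul_sub, hq_idem, hqp, hpq, hp2]
      abel
    rw [this]
    exact posSemidef_conjTranspose_mul_self _
  -- q ≠ 1
  have hqne1 : q ≠ 1 := by
    intro h
    apply hφ
    apply CP_phi_zero_of_one hcp
    rw [← h]
    exact hφq
  refine ⟨q, ⟨hq_herm, hq_idem, hqne1, hφq, hmax, habs⟩, ?_⟩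
  rintro q' ⟨h1, h2, _h3, h4, h5, _h6⟩
  have a1 : (q' - q).PosSemidef := h5 q hq_herm hq_idem hφq
  have a2 : (q - q').PosSemidef := hmax q' h1 h2 h4
  have a2' : (-(q' - q)).PosSemidef := by rwa [neg_sub]
  have := CP_psd_eq_zero_of_neg a1 a2'
  exact sub_eq_zero.mp this
end

section
/- Fix n ≥ 1, real numbers α_1, …, α_n and positive reals ω_1, …, ω_{n−1}. For ξ ∈ ℂ with Im ξ > 0, define g_n(ξ) = 1/(ξ − α_n) and, by downward recursion, g_k(ξ) = 1/(ξ − α_k − ω_k g_{k+1}(ξ)) for 1 ≤ k ≤ n−1 (all denominators are nonzero since each g_k maps the upper half-plane to the lower half-plane). Let D = diag(α_1, …, α_n), let V ∈ M_n(ℂ) be the matrix with entries V_{k+1,k} = ω_k^{1/2} and zeros elsewhere, and let η(a) = V a V^*. Then the diagonal matrix G(ξ) = diag(g_1(ξ), …, g_n(ξ)) satisfies the functional equation ξ·G(ξ) = I + (D + η(G(ξ)))·G(ξ). -/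
open Matrix

theorem tridiagonal_functional_equation
    (n : ℕ) (hn : 1 ≤ n) (α : ℕ → ℝ) (ω : ℕ → ℝ)
    (hω : ∀ k, 1 ≤ k → k ≤ n - 1 → 0 < ω k)
    (g : ℕ → ℂ → ℂ)
    (hgn : ∀ ξ : ℂ, 0 < ξ.im → g n ξ = (ξ - (α n : ℂ))⁻¹)
    (hgk : ∀ k, 1 ≤ k → k ≤ n - 1 → ∀ ξ : ℂ, 0 < ξ.im →
      g k ξ = (ξ - (α k : ℂ) - (ω k : ℂ) * g (k + 1) ξ)⁻¹)
    (D V : Matrix (Fin n) (Fin n) ℂ)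
    (hD : D = Matrix.diagonal (fun k : Fin n => ((α ((k : ℕ) + 1) : ℝ) : ℂ)))
    (hV : V = fun i j : Fin n =>
      if (i : ℕ) = (j : ℕ) + 1 then ((Real.sqrt (ω ((j : ℕ) + 1)) : ℝ) : ℂ) else 0)
    (ξ : ℂ) (hξ : 0 < ξ.im)
    (G : Matrix (Fin n) (Fin n) ℂ)
    (hG : G = Matrix.diagonal (fun k : Fin n => g ((k : ℕ) + 1) ξ)) :
    (∀ k, 1 ≤ k → k ≤ n → (g k ξ).im < 0) ∧
    ξ • G = 1 + (D + Vᴴ * G * V) * G := by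
  have ne_of_im : ∀ z : ℂ, z.im ≠ 0 → z ≠ 0 := by
    intro z hz h; rw [h] at hz; simp at hz
  have inv_neg : ∀ z : ℂ, 0 < z.im → (z⁻¹).im < 0 := by
    intro z hz
    rw [Complex.inv_im]
    exact div_neg_of_neg_of_pos (by linarith)
      (Complex.normSq_pos.mpr (ne_of_im z (by linarith)))
  have hgnim : (g n ξ).im < 0 := by
    rw [hgn ξ hξ]; exact inv_neg _ (by simp [hξ])
  have imden : ∀ k, 1 ≤ k → k ≤ n - 1 → (g (k + 1) ξ).im < 0 →
      0 < (ξ - (α k : ℂ) - (ω k : ℂ) * g (k + 1) ξ).im := by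
    intro k h1 h2 hgim
    have hω' := hω k h1 h2
    have : (ξ - (α k : ℂ) - (ω k : ℂ) * g (k + 1) ξ).im
        = ξ.im - ω k * (g (k + 1) ξ).im := by
      simp [Complex.sub_im, Complex.mul_im]
    rw [this]; nlinarith
  have him : ∀ k, 1 ≤ k → k ≤ n → (g k ξ).im < 0 := by
    have key : ∀ m, ∀ k, 1 ≤ k → k ≤ n → n - k ≤ m → (g k ξ).im < 0 := by
      intro m
      induction m with
      | zero =>
        intro k h1 h2 h3
        have : k = n := by omega
        subst this; exact hgnim
      | succ m ih =>
        intro k h1 h2 h3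
        by_cases hk : k = n
        · subst hk; exact hgnim
        · have hk1 : k ≤ n - 1 := by omega
          have him1 := ih (k + 1) (by omega) (by omega) (by omega)
          rw [hgk k h1 hk1 ξ hξ]
          exact inv_neg _ (imden k h1 hk1 him1)
    exact fun k h1 h2 => key (n - k) k h1 h2 le_rfl
  refine ⟨him, ?_⟩
  -- the middle matrix is diagonal
  have hVGV : Vᴴ * G * V = Matrix.diagonal
      (fun k : Fin n => if (k : ℕ) + 1 < n then (ω ((k : ℕ) + 1) : ℂ) * g ((k : ℕ) + 2) ξ else 0) := by
    ext i j
    simp only [Matrix.mul_apply, Matrix.conjTranspose_apply]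
    subst hG hV
    simp only [Matrix.mul_apply, Matrix.conjTranspose_apply, Matrix.diagonal_apply]
    by_cases h : (i : ℕ) + 1 < n
    · rw [Finset.sum_eq_single (⟨(i : ℕ) + 1, h⟩ : Fin n)]
      · have hωpos := hω ((i : ℕ) + 1) (by omega) (by omega)
        by_cases hij : i = j
        · subst hij
          simp [Finset.sum_ite_eq, Complex.conj_ofReal, h]
          rw [show (i:ℕ)+1+1 = (i:ℕ)+2 from rfl, mul_comm, ← mul_assoc,
            ← Complex.ofReal_mul, Real.mul_self_sqrt hωpos.le]
        · have hij' : ¬ ((i : ℕ) + 1 = (j : ℕ) + 1) := by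
            simpa [Fin.ext_iff] using hij
          simp [hij', Ne.symm hij, hij, Fin.val_inj]
      · intro b _ hb
        have hb' : ¬ ((b : ℕ) = (i : ℕ) + 1) := by
          intro hh
          exact hb (by simp [Fin.ext_iff, hh])
        simp [hb']
      · intro hmem
        exact absurd (Finset.mem_univ _) hmem
    · have hz : ∀ b : Fin n, ¬ ((b : ℕ) = (i : ℕ) + 1) := by
        intro b hb; exact h (hb ▸ b.isLt)
      by_cases hij : i = j
      · subst hij; simp [hz, h]
      · simp [hz, hij]
  rw [hVGV]
  subst hG hD
  rw [Matrix.diagonal_add, Matrix.diagonal_mul_diagonal, ← Matrix.diagonal_one,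
    Matrix.diagonal_add]
  have hsd : ξ • Matrix.diagonal (fun k : Fin n => g ((k : ℕ) + 1) ξ)
      = Matrix.diagonal (fun k : Fin n => ξ * g ((k : ℕ) + 1) ξ) := by
    ext i j
    by_cases hij : i = j
    · subst hij; simp
    · simp [Matrix.diagonal_apply, hij]
  rw [hsd]
  apply congrArg Matrix.diagonal
  funext k
  by_cases h : (k : ℕ) + 1 < n
  · have h1 : (1 : ℕ) ≤ (k : ℕ) + 1 := by omega
    have h2 : (k : ℕ) + 1 ≤ n - 1 := by omega
    have hgeq := hgk ((k : ℕ) + 1) h1 h2 ξ hξ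
    have hgim := him ((k : ℕ) + 2) (by omega) (by omega)
    have hden : ξ - (α ((k : ℕ) + 1) : ℂ) - (ω ((k : ℕ) + 1) : ℂ) * g ((k : ℕ) + 2) ξ ≠ 0 :=
      ne_of_im _ (by have := imden ((k : ℕ) + 1) h1 h2 hgim; linarith)
    rw [if_pos h]
    rw [hgeq]
    field_simp
    ring
  · have hkn : (k : ℕ) + 1 = n := by omega
    have hgeq := hgn ξ hξ
    have hden : ξ - (α n : ℂ) ≠ 0 := ne_of_im _ (by simp; linarith)
    rw [if_neg h]
    rw [hkn, hgeq]
    field_simp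
    ring
end
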